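/- [Final complexity of the inexact proximal scheme] In the setting of the inexact proximal method with step-size rule a_{i+1} = (1/(2‖F'(x_i)‖))^{(p−1)/p}·(p!/((p+1)L_p))^{1/p} and accuracies δ_k = c/k^s for fixed constants c > 0 and s > 1, suppose F(x_k) − F* ≥ ε for 1 ≤ k ≤ K, where ε > 0. Set R = ‖x_0 − x*‖ + cs/(s−1). Then for every k with ln(‖F'(x_0)‖·R/ε) ≤ k ≤ K, the averaged point x̄_k = (Σ_{i=1}^k a_i x_i)/(Σ_{i=1}^k a_i) satisfies F(x̄_k) − F* ≤ (L_p·R^{p+1}/k^{(p+1)/2})·((p+1)·2^{p−2}·e^{p−1}/p!). -/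

import Mathlib

open scoped RealInnerProductSpace

/-- `g` is a subgradient of `φ` at `z`, relative to the set `s`. -/
def IsSubgradOn {E : Type*} [NormedAddCommGroup E] [InnerProductSpace ℝ E]
    (s : Set E) (φ : E → ℝ) (g z : E) : Prop :=
  ∀ y ∈ s, φ z + ⟪g, y - z⟫ ≤ φ y

namespace InexactProxAux

/-- Sums over `Icc 1 k` as shifted range sums. -/
lemma sum_Icc_one (M : Type*) [AddCommMonoid M] (f : ℕ → M) (k : ℕ) :
    ∑ i ∈ Finset.Icc 1 k, f i = ∑ j ∈ Finset.range k, f (j + 1) := by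
  induction k with
  | zero => simp
  | succ n ih => rw [Finset.sum_Icc_succ_top (by omega), ih, Finset.sum_range_succ]

/-- AM–GM via convexity of `exp`. -/
lemma mul_exp_avg_le_sum (k : ℕ) (hk : 0 < k) (f : ℕ → ℝ) :
    (k : ℝ) * Real.exp ((∑ i ∈ Finset.range k, f i) / k) ≤
      ∑ i ∈ Finset.range k, Real.exp (f i) := by
  have hk' : (0:ℝ) < k := by exact_mod_cast hk
  set m : ℝ := (∑ i ∈ Finset.range k, f i) / k with hm
  have hsum : ∑ i ∈ Finset.range k, f i = (k:ℝ) * m := by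
    rw [hm]; field_simp
  have h1 : ∀ i ∈ Finset.range k, Real.exp m * (1 + (f i - m)) ≤ Real.exp (f i) := by
    intro i _
    have h2 : f i - m + 1 ≤ Real.exp (f i - m) := Real.add_one_le_exp _
    have h3 : Real.exp m * Real.exp (f i - m) = Real.exp (f i) := by
      rw [← Real.exp_add]; ring_nf
    nlinarith [Real.exp_pos m]
  have h4 : ∑ i ∈ Finset.range k, Real.exp m * (1 + (f i - m)) = (k:ℝ) * Real.exp m := by
    rw [← Finset.mul_sum]
    have h5 : ∑ i ∈ Finset.range k, (1 + (f i - m)) = (k:ℝ) := by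
      rw [Finset.sum_add_distrib, Finset.sum_sub_distrib, Finset.sum_const,
        Finset.card_range, hsum, Finset.sum_const, Finset.card_range]
      simp
    rw [h5]; ring
  calc (k:ℝ) * Real.exp m = ∑ i ∈ Finset.range k, Real.exp m * (1 + (f i - m)) := h4.symm
    _ ≤ ∑ i ∈ Finset.range k, Real.exp (f i) := Finset.sum_le_sum h1

/-- Key p-series step: for `x ≥ 1`, `1/(x+1)^s ≤ x^(1-s)/(s-1) - (x+1)^(1-s)/(s-1)`. -/
lemma rpow_step (s : ℝ) (hs : 1 < s) (x : ℝ) (hx : 1 ≤ x) :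
    1 / (x + 1) ^ s ≤ x ^ (1 - s) / (s - 1) - (x + 1) ^ (1 - s) / (s - 1) := by
  have hx0 : (0:ℝ) < x := by linarith
  have hx1 : (0:ℝ) < x + 1 := by linarith
  have hs1 : (0:ℝ) < s - 1 := by linarith
  have hinv : (0:ℝ) < 1/x := by positivity
  have hb : 1 + s * (1/x) ≤ (1 + 1/x) ^ s :=
    one_add_mul_self_le_rpow_one_add (by linarith) hs.le
  have hxs : (0:ℝ) < x ^ s := Real.rpow_pos_of_pos hx0 s
  have hx1s : (0:ℝ) < (x + 1) ^ s := Real.rpow_pos_of_pos hx1 s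
  have hkey : x ^ s * (x + s) ≤ x * (x + 1) ^ s := by
    have h1 : (x + 1) ^ s = x ^ s * (1 + 1/x) ^ s := by
      rw [← Real.mul_rpow hx0.le (by positivity)]
      congr 1
      field_simp
    rw [h1]
    have h2 : x * (x ^ s * (1 + 1/x) ^ s) = x ^ s * (x * (1 + 1/x) ^ s) := by ring
    rw [h2]
    apply mul_le_mul_of_nonneg_left _ hxs.le
    have h3 : x + s = x * (1 + s * (1/x)) := by field_simp
    rw [h3]
    exact mul_le_mul_of_nonneg_left hb hx0.le
  have e1 : x ^ (1 - s) = x / x ^ s := by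
    rw [Real.rpow_sub hx0, Real.rpow_one]
  have e2 : (x + 1) ^ (1 - s) = (x + 1) / (x + 1) ^ s := by
    rw [Real.rpow_sub hx1, Real.rpow_one]
  have target_eq : x / x ^ s / (s-1) - (x + 1) / (x + 1) ^ s / (s-1)
      = (x * (x+1)^s - (x+1) * x^s) / ((s-1) * (x^s * (x+1)^s)) := by
    field_simp
  rw [e1, e2, target_eq, le_div_iff₀ (by positivity), div_mul_eq_mul_div, div_le_iff₀ hx1s]
  nlinarith [mul_le_mul_of_nonneg_right hkey hx1s.le, hxs, hx1s]

/-- The p-series bound `∑_{j<k} 1/(j+1)^s ≤ s/(s-1)`. -/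
lemma sum_one_div_rpow_le (k : ℕ) (s : ℝ) (hs : 1 < s) :
    ∑ j ∈ Finset.range k, 1 / ((j : ℝ) + 1) ^ s ≤ s / (s - 1) := by
  have hs1 : (0:ℝ) < s - 1 := by linarith
  cases k with
  | zero => simp; positivity
  | succ n =>
    rw [Finset.sum_range_succ']
    have h0 : 1 / (((0:ℕ) : ℝ) + 1) ^ s = 1 := by norm_num
    rw [h0]
    set b : ℕ → ℝ := fun m => ((m:ℝ)) ^ (1 - s) / (s - 1) with hb
    have hstep : ∀ j ∈ Finset.range n, 1 / ((((j:ℕ)+1 : ℕ) : ℝ) + 1) ^ s ≤ b (j+1) - b (j+2) := by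
      intro j _
      have hcast : ((j:ℝ) + 1) ≥ 1 := by
        have : (0:ℝ) ≤ (j:ℝ) := Nat.cast_nonneg j
        linarith
      have h := rpow_step s hs ((j:ℝ) + 1) hcast
      simp only [hb]
      have c1 : (((j:ℕ)+1 : ℕ) : ℝ) = (j:ℝ) + 1 := by push_cast; ring
      have c2 : (((j:ℕ)+2 : ℕ) : ℝ) = ((j:ℝ) + 1) + 1 := by push_cast; ring
      rw [c1, c2]
      exact h
    have htel : ∑ j ∈ Finset.range n, (b (j+1) - b (j+2)) = b 1 - b (n+1) := by
      have h := Finset.sum_range_sub' (fun i => b (i+1)) n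
      simpa using h
    have hsum : ∑ j ∈ Finset.range n, 1 / ((((j:ℕ)+1 : ℕ) : ℝ) + 1) ^ s ≤ b 1 - b (n+1) := by
      rw [← htel]
      exact Finset.sum_le_sum hstep
    have hb1 : b 1 = 1 / (s - 1) := by simp [hb]
    have hbn : 0 ≤ b (n+1) := by
      apply div_nonneg _ hs1.le
      apply Real.rpow_nonneg
      positivity
    have hfin : 1 + 1/(s-1) = s/(s-1) := by field_simp; ring
    rw [hb1] at hsum
    linarith [hsum]

/-- From the prox-subgradient inequality, deduce the linear subgradient
inequality by moving towards `y` and letting the step size tend to zero. -/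
lemma subgrad_from_prox {E : Type*} [NormedAddCommGroup E] [InnerProductSpace ℝ E]
    {domF : Set E} {F : E → ℝ} (hFconv : ConvexOn ℝ domF F)
    {a : ℝ} (ha : 0 < a) {w z y : E} (hz : z ∈ domF) (hy : y ∈ domF)
    (hsub' : ∀ v ∈ domF, a * F z + ⟪w, v - z⟫ ≤ a * F v + ‖v - z‖ ^ 2 / 2) :
    ⟪w, y - z⟫ ≤ a * (F y - F z) := by
  apply le_of_forall_pos_le_add
  intro η hη
  set c : ℝ := ‖y - z‖ ^ 2 / 2 with hc
  have hc0 : 0 ≤ c := by positivity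
  set t : ℝ := min 1 (η / (c + 1)) with ht
  have ht0 : 0 < t := lt_min one_pos (div_pos hη (by linarith))
  have ht1 : t ≤ 1 := min_le_left _ _
  have hv : (1 - t) • z + t • y ∈ domF := hFconv.1 hz hy (by linarith) ht0.le (by ring)
  have h1 := hsub' _ hv
  have hdiff : (1 - t) • z + t • y - z = t • (y - z) := by module
  have hFv : F ((1 - t) • z + t • y) ≤ (1 - t) * F z + t * F y :=
    hFconv.2 hz hy (by linarith) ht0.le (by ring)
  rw [hdiff, real_inner_smul_right] at h1
  have hn : ‖t • (y - z)‖ ^ 2 / 2 = t ^ 2 * c := by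
    rw [norm_smul, Real.norm_eq_abs, abs_of_pos ht0, mul_pow]
    rw [hc]; ring
  rw [hn] at h1
  have h2 : a * F z + t * ⟪w, y - z⟫ ≤ a * ((1 - t) * F z + t * F y) + t ^ 2 * c := by
    nlinarith [hFv, ha]
  have h3 : ⟪w, y - z⟫ ≤ a * (F y - F z) + t * c := by nlinarith [h2, ht0]
  have h4 : t * c ≤ η := by
    have h5 : t ≤ η / (c + 1) := min_le_right _ _
    have h6 : t * c ≤ (η / (c + 1)) * c := mul_le_mul_of_nonneg_right h5 hc0
    have h7 : (η / (c + 1)) * c ≤ η := by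
      rw [div_mul_eq_mul_div, div_le_iff₀ (by linarith)]
      nlinarith
    linarith
  linarith

end InexactProxAux
set_option maxHeartbeats 2000000 in
/-- Theorem 6.2 of the paper: final complexity of the inexact proximal
scheme. With the step-size rule `a_{i+1} = (1/(2‖F'(x_i)‖))^{(p−1)/p}(p!/((p+1)L_p))^{1/p}`,
accuracies `δ_k = c/k^s` (`c > 0`, `s > 1`), `R = ‖x_0 − x*‖ + cs/(s−1)`, and
`F(x_k) − F* ≥ ε` for `1 ≤ k ≤ K`: for every `k` with
`ln(‖F'(x_0)‖R/ε) ≤ k ≤ K`, the averaged point `x̄_k` satisfies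
`F(x̄_k) − F* ≤ (L_p R^{p+1}/k^{(p+1)/2})·((p+1)2^{p−2}e^{p−1}/p!)`. -/
theorem inexact_prox_final_complexity
    {E : Type*} [NormedAddCommGroup E] [InnerProductSpace ℝ E] [FiniteDimensional ℝ E]
    (p : ℕ) (hp : 2 ≤ p) (Lp : ℝ) (hLp : 0 < Lp)
    (F : E → ℝ) (domF : Set E) (hFconv : ConvexOn ℝ domF F)
    (hcl : IsClosed domF) (hlsc : LowerSemicontinuousOn F domF)
    (xstar : E) (hxstar : xstar ∈ domF) (hmin : ∀ y ∈ domF, F xstar ≤ F y)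
    (Fstar : ℝ) (hFstar : Fstar = F xstar)
    (x g : ℕ → E) (a δ : ℕ → ℝ)
    (hx : ∀ i, x i ∈ domF)
    (hsub : ∀ i, 1 ≤ i → ∀ y ∈ domF,
      a i * F (x i) + ‖x i - x (i - 1)‖ ^ 2 / 2 + ⟪g i, y - x i⟫ ≤
        a i * F y + ‖y - x (i - 1)‖ ^ 2 / 2)
    (hg : ∀ i, 1 ≤ i → ‖g i‖ ≤ δ i)
    (Fp : ℕ → E) (hFp : ∀ i, 1 ≤ i → Fp i = (a i)⁻¹ • (g i - (x i - x (i - 1))))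
    (hFp0 : IsSubgradOn domF F (Fp 0) (x 0))
    (hFpne : ∀ i, Fp i ≠ 0)
    (harule : ∀ i : ℕ, a (i + 1) =
      (1 / (2 * ‖Fp i‖)) ^ (((p : ℝ) - 1) / p)
        * ((Nat.factorial p : ℝ) / (((p : ℝ) + 1) * Lp)) ^ ((1 : ℝ) / p))
    (c s : ℝ) (hc : 0 < c) (hs : 1 < s)
    (hδrule : ∀ k : ℕ, 1 ≤ k → δ k = c / (k : ℝ) ^ s)
    (ε : ℝ) (hε : 0 < ε) (K : ℕ)
    (hlower : ∀ k : ℕ, 1 ≤ k → k ≤ K → ε ≤ F (x k) - Fstar)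
    (R : ℝ) (hR : R = ‖x 0 - xstar‖ + c * s / (s - 1)) :
    ∀ k : ℕ, 1 ≤ k → Real.log (‖Fp 0‖ * R / ε) ≤ (k : ℝ) → k ≤ K →
      F ((∑ i ∈ Finset.Icc 1 k, a i)⁻¹ • ∑ i ∈ Finset.Icc 1 k, a i • x i) - Fstar ≤
        Lp * R ^ (p + 1) / (k : ℝ) ^ (((p : ℝ) + 1) / 2)
          * (((p : ℝ) + 1) * 2 ^ (p - 2) * Real.exp ((p : ℝ) - 1)
            / (Nat.factorial p : ℝ)) := by
  classical
  intro k hk hklog hkK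
  obtain ⟨k', rfl⟩ : ∃ k'', k = k'' + 1 := ⟨k - 1, by omega⟩
  -- basic positivity
  have hp2R : (2:ℝ) ≤ (p:ℝ) := by exact_mod_cast hp
  have hpR0 : (0:ℝ) < (p:ℝ) := by linarith
  have hpne : (p:ℝ) ≠ 0 := hpR0.ne'
  have hn0 : (0:ℝ) < ((k' + 1 : ℕ):ℝ) := by positivity
  have hfac : (0:ℝ) < (Nat.factorial p : ℝ) := by exact_mod_cast p.factorial_pos
  set Cp : ℝ := (Nat.factorial p : ℝ) / (((p : ℝ) + 1) * Lp) with hCpdef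
  have hCp : 0 < Cp := by
    rw [hCpdef]; apply div_pos hfac; positivity
  have hGpos : ∀ i, 0 < ‖Fp i‖ := fun i => norm_pos_iff.mpr (hFpne i)
  have hapos : ∀ i, 0 < a (i + 1) := by
    intro i
    rw [harule i]
    apply mul_pos
    · apply Real.rpow_pos_of_pos
      have := hGpos i; positivity
    · exact Real.rpow_pos_of_pos hCp _
  have hveq : ∀ j : ℕ, a (j + 1) • Fp (j + 1) = g (j + 1) - (x (j + 1) - x j) := by
    intro j
    rw [hFp (j + 1) (by omega)]
    simp only [Nat.add_sub_cancel]
    rw [smul_inv_smul₀ (hapos j).ne']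
  have hu_eq : ∀ j : ℕ, ‖g (j + 1) - (x (j + 1) - x j)‖ = a (j + 1) * ‖Fp (j + 1)‖ := by
    intro j
    rw [← hveq j, norm_smul, Real.norm_eq_abs, abs_of_pos (hapos j)]
  have hu_pos : ∀ j : ℕ, 0 < ‖g (j + 1) - (x (j + 1) - x j)‖ := by
    intro j; rw [hu_eq j]; exact mul_pos (hapos j) (hGpos (j + 1))
  have hδpos : ∀ j : ℕ, 0 < δ (j + 1) := by
    intro j
    rw [hδrule (j + 1) (by omega)]
    apply div_pos hc
    apply Real.rpow_pos_of_pos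
    exact_mod_cast Nat.succ_pos j
  -- rewritten prox inequality
  have hsub' : ∀ j : ℕ, ∀ v ∈ domF,
      a (j+1) * F (x (j+1)) + ⟪g (j + 1) - (x (j + 1) - x j), v - x (j+1)⟫ ≤
        a (j+1) * F v + ‖v - x (j+1)‖ ^ 2 / 2 := by
    intro j v hvmem
    have h := hsub (j + 1) (by omega) v hvmem
    simp only [Nat.add_sub_cancel] at h
    have hexp : ‖v - x j‖ ^ 2
        = ‖v - x (j+1)‖ ^ 2 + 2 * ⟪v - x (j+1), x (j+1) - x j⟫ + ‖x (j+1) - x j‖ ^ 2 := by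
      have hidv : v - x j = (v - x (j+1)) + (x (j+1) - x j) := by abel
      rw [hidv, norm_add_sq_real]
    have hinner : ⟪g (j + 1) - (x (j + 1) - x j), v - x (j+1)⟫
        = ⟪g (j+1), v - x (j+1)⟫ - ⟪v - x (j+1), x (j+1) - x j⟫ := by
      rw [inner_sub_left, real_inner_comm (x (j+1) - x j) (v - x (j+1))]
    rw [hinner]
    linarith [h, hexp]
  -- subgradient inequality at the minimizer
  have hN_ge : ∀ j : ℕ, a (j + 1) * (F (x (j + 1)) - F xstar) ≤
      ⟪g (j + 1) - (x (j + 1) - x j), x (j + 1) - xstar⟫ := by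
    intro j
    have h := InexactProxAux.subgrad_from_prox hFconv (hapos j) (hx (j+1)) hxstar (hsub' j)
    have h2 : ⟪g (j + 1) - (x (j + 1) - x j), xstar - x (j+1)⟫
        = -⟪g (j + 1) - (x (j + 1) - x j), x (j + 1) - xstar⟫ := by
      rw [show xstar - x (j+1) = -(x (j+1) - xstar) by abel, inner_neg_right]
    rw [h2] at h
    nlinarith [h]
  have hN_nonneg : ∀ j : ℕ, 0 ≤ ⟪g (j + 1) - (x (j + 1) - x j), x (j + 1) - xstar⟫ := by
    intro j
    refine le_trans ?_ (hN_ge j)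
    have := hmin _ (hx (j + 1))
    nlinarith [hapos j]
  -- key identity
  have hid : ∀ j : ℕ, ‖x (j+1) - xstar‖ ^ 2 + ‖g (j + 1) - (x (j + 1) - x j)‖ ^ 2
      + 2 * ⟪g (j + 1) - (x (j + 1) - x j), x (j + 1) - xstar⟫
      = ‖(x j - xstar) + g (j+1)‖ ^ 2 := by
    intro j
    have hidv : (x j - xstar) + g (j+1) = (x (j+1) - xstar) + (g (j + 1) - (x (j + 1) - x j)) := by
      abel
    rw [hidv, norm_add_sq_real, real_inner_comm]
    ring
  -- the invariant
  have hinv : ∀ m : ℕ,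
      (∑ j ∈ Finset.range m, (‖g (j + 1) - (x (j + 1) - x j)‖ ^ 2
        + 2 * ⟪g (j + 1) - (x (j + 1) - x j), x (j + 1) - xstar⟫)) + ‖x m - xstar‖ ^ 2
      ≤ (‖x 0 - xstar‖ + ∑ j ∈ Finset.range m, δ (j + 1)) ^ 2 := by
    intro m
    induction m with
    | zero => simp
    | succ i ih =>
      have hBnn : 0 ≤ ‖x 0 - xstar‖ + ∑ j ∈ Finset.range i, δ (j + 1) :=
        add_nonneg (norm_nonneg _) (Finset.sum_nonneg fun j _ => (hδpos j).le)
      have hsum_nn : 0 ≤ ∑ j ∈ Finset.range i, (‖g (j + 1) - (x (j + 1) - x j)‖ ^ 2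
          + 2 * ⟪g (j + 1) - (x (j + 1) - x j), x (j + 1) - xstar⟫) :=
        Finset.sum_nonneg fun j _ => by
          nlinarith [hN_nonneg j, sq_nonneg (‖g (j + 1) - (x (j + 1) - x j)‖)]
      have hrm : ‖x i - xstar‖ ≤ ‖x 0 - xstar‖ + ∑ j ∈ Finset.range i, δ (j + 1) := by
        nlinarith [ih, hsum_nn, norm_nonneg (x i - xstar), hBnn]
      rw [Finset.sum_range_succ, Finset.sum_range_succ]
      have hidd := hid i
      have htri : ‖(x i - xstar) + g (i+1)‖ ≤ ‖x i - xstar‖ + δ (i + 1) :=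
        le_trans (norm_add_le _ _) (by linarith [hg (i + 1) (by omega)])
      have htri2 : ‖(x i - xstar) + g (i+1)‖ ^ 2 ≤ (‖x i - xstar‖ + δ (i + 1)) ^ 2 :=
        pow_le_pow_left₀ (norm_nonneg _) htri 2
      have e5 : ‖g (i + 1) - (x (i + 1) - x i)‖ ^ 2
          + 2 * ⟪g (i + 1) - (x (i + 1) - x i), x (i + 1) - xstar⟫
          + ‖x (i+1) - xstar‖ ^ 2 ≤ (‖x i - xstar‖ + δ (i + 1)) ^ 2 := by
        linarith [hidd, htri2]
      have e6 : 2 * δ (i+1) * ‖x i - xstar‖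
          ≤ 2 * δ (i+1) * (‖x 0 - xstar‖ + ∑ j ∈ Finset.range i, δ (j + 1)) := by
        have := mul_le_mul_of_nonneg_left hrm (by linarith [hδpos i] : (0:ℝ) ≤ 2 * δ (i+1))
        linarith [this]
      have e7 : (‖x i - xstar‖ + δ (i+1)) ^ 2
          = ‖x i - xstar‖ ^ 2 + 2 * δ (i+1) * ‖x i - xstar‖ + δ (i+1) ^ 2 := by ring
      have e8 : ((‖x 0 - xstar‖ + ∑ j ∈ Finset.range i, δ (j + 1)) + δ (i+1)) ^ 2
          = (‖x 0 - xstar‖ + ∑ j ∈ Finset.range i, δ (j + 1)) ^ 2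
            + 2 * δ (i+1) * (‖x 0 - xstar‖ + ∑ j ∈ Finset.range i, δ (j + 1)) + δ (i+1) ^ 2 := by
        ring
      have goal_eq : (‖x 0 - xstar‖ + (∑ j ∈ Finset.range i, δ (j + 1) + δ (i + 1))) ^ 2
          = ((‖x 0 - xstar‖ + ∑ j ∈ Finset.range i, δ (j + 1)) + δ (i+1)) ^ 2 := by ring
      rw [goal_eq]
      linarith [ih, e5, e6, e7, e8]
  
  -- sum of the noise levels
  have hσD : ∑ j ∈ Finset.range (k' + 1), δ (j + 1) ≤ c * s / (s - 1) := by
    have hterm : ∀ j ∈ Finset.range (k' + 1), δ (j + 1) = c * (1 / ((j:ℝ) + 1) ^ s) := by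
      intro j _
      rw [hδrule (j + 1) (by omega)]
      push_cast
      ring
    rw [Finset.sum_congr rfl hterm, ← Finset.mul_sum]
    calc c * ∑ j ∈ Finset.range (k' + 1), 1 / ((j:ℝ) + 1) ^ s
        ≤ c * (s / (s - 1)) :=
          mul_le_mul_of_nonneg_left (InexactProxAux.sum_one_div_rpow_le (k' + 1) s hs) hc.le
      _ = c * s / (s - 1) := by ring
  have hρσR : ‖x 0 - xstar‖ + ∑ j ∈ Finset.range (k' + 1), δ (j + 1) ≤ R := by
    rw [hR]; linarith [hσD]
  have hRpos : 0 < R := by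
    rw [hR]
    have h1 : 0 < c * s / (s - 1) := by
      apply div_pos (mul_pos hc (by linarith)) (by linarith)
    linarith [norm_nonneg (x 0 - xstar)]
  -- global bounds Q + 2 SN + r_n^2 ≤ R^2
  have hQSN : (∑ j ∈ Finset.range (k' + 1), (‖g (j + 1) - (x (j + 1) - x j)‖ ^ 2
        + 2 * ⟪g (j + 1) - (x (j + 1) - x j), x (j + 1) - xstar⟫)) + ‖x (k' + 1) - xstar‖ ^ 2
      ≤ R ^ 2 := by
    refine le_trans (hinv (k' + 1)) ?_
    have hb0 : 0 ≤ ‖x 0 - xstar‖ + ∑ j ∈ Finset.range (k' + 1), δ (j + 1) :=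
      add_nonneg (norm_nonneg _) (Finset.sum_nonneg fun j _ => (hδpos j).le)
    exact pow_le_pow_left₀ hb0 hρσR 2
  have hsplit : ∑ j ∈ Finset.range (k' + 1), (‖g (j + 1) - (x (j + 1) - x j)‖ ^ 2
        + 2 * ⟪g (j + 1) - (x (j + 1) - x j), x (j + 1) - xstar⟫)
      = (∑ j ∈ Finset.range (k' + 1), ‖g (j + 1) - (x (j + 1) - x j)‖ ^ 2)
        + 2 * ∑ j ∈ Finset.range (k' + 1), ⟪g (j + 1) - (x (j + 1) - x j), x (j + 1) - xstar⟫ := by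
    rw [Finset.sum_add_distrib, Finset.mul_sum]
  have hQ : ∑ j ∈ Finset.range (k' + 1), ‖g (j + 1) - (x (j + 1) - x j)‖ ^ 2 ≤ R ^ 2 := by
    rw [hsplit] at hQSN
    have h1 : 0 ≤ ∑ j ∈ Finset.range (k' + 1), ⟪g (j + 1) - (x (j + 1) - x j), x (j + 1) - xstar⟫ :=
      Finset.sum_nonneg fun j _ => hN_nonneg j
    linarith [sq_nonneg (‖x (k' + 1) - xstar‖)]
  have hSN : ∑ j ∈ Finset.range (k' + 1), ⟪g (j + 1) - (x (j + 1) - x j), x (j + 1) - xstar⟫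
      ≤ R ^ 2 / 2 := by
    rw [hsplit] at hQSN
    have h1 : 0 ≤ ∑ j ∈ Finset.range (k' + 1), ‖g (j + 1) - (x (j + 1) - x j)‖ ^ 2 :=
      Finset.sum_nonneg fun j _ => sq_nonneg _
    linarith [sq_nonneg (‖x (k' + 1) - xstar‖)]
  have hrn : ‖x (k' + 1) - xstar‖ ≤ R := by
    rw [hsplit] at hQSN
    have h1 : 0 ≤ ∑ j ∈ Finset.range (k' + 1), ⟪g (j + 1) - (x (j + 1) - x j), x (j + 1) - xstar⟫ :=
      Finset.sum_nonneg fun j _ => hN_nonneg j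
    have h2 : 0 ≤ ∑ j ∈ Finset.range (k' + 1), ‖g (j + 1) - (x (j + 1) - x j)‖ ^ 2 :=
      Finset.sum_nonneg fun j _ => sq_nonneg _
    have hr2 : ‖x (k' + 1) - xstar‖ ^ 2 ≤ R ^ 2 := by linarith
    nlinarith [norm_nonneg (x (k' + 1) - xstar), hRpos, hr2]
  -- the weighted objective-gap sum
  have hSF_le : ∑ j ∈ Finset.range (k' + 1), a (j + 1) * (F (x (j + 1)) - Fstar) ≤ R ^ 2 / 2 := by
    refine le_trans (Finset.sum_le_sum fun j _ => ?_) hSN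
    rw [hFstar]
    exact hN_ge j
  have hSF_nonneg : 0 ≤ ∑ j ∈ Finset.range (k' + 1), a (j + 1) * (F (x (j + 1)) - Fstar) := by
    apply Finset.sum_nonneg
    intro j _
    apply mul_nonneg (hapos j).le
    rw [hFstar]
    linarith [hmin _ (hx (j + 1))]
  -- lower gradient bound at step (k' + 1)
  have hGk : ε ≤ ‖Fp (k' + 1)‖ * R := by
    have h1 : a (k' + 1) * ε ≤ a (k' + 1) * (F (x (k' + 1)) - Fstar) :=
      mul_le_mul_of_nonneg_left (hlower (k' + 1) (by omega) hkK) (hapos k').le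
    have h2 : a (k' + 1) * (F (x (k' + 1)) - Fstar) ≤
        ⟪g (k' + 1) - (x (k' + 1) - x k'), x (k' + 1) - xstar⟫ := by
      rw [hFstar]
      exact hN_ge k'
    have h3 : ⟪g (k' + 1) - (x (k' + 1) - x k'), x (k' + 1) - xstar⟫ ≤
        ‖g (k' + 1) - (x (k' + 1) - x k')‖ * ‖x (k' + 1) - xstar‖ := real_inner_le_norm _ _
    have h4 : ‖g (k' + 1) - (x (k' + 1) - x k')‖ * ‖x (k' + 1) - xstar‖
        ≤ (a (k' + 1) * ‖Fp (k' + 1)‖) * R := by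
      rw [← hu_eq k']
      exact mul_le_mul_of_nonneg_left hrn (norm_nonneg _)
    have h5 : a (k' + 1) * ε ≤ a (k' + 1) * (‖Fp (k' + 1)‖ * R) := by
      calc a (k' + 1) * ε ≤ a (k' + 1) * (F (x (k' + 1)) - Fstar) := h1
        _ ≤ ⟪g (k' + 1) - (x (k' + 1) - x k'), x (k' + 1) - xstar⟫ := h2
        _ ≤ ‖g (k' + 1) - (x (k' + 1) - x k')‖ * ‖x (k' + 1) - xstar‖ := h3
        _ ≤ (a (k' + 1) * ‖Fp (k' + 1)‖) * R := h4
        _ = a (k' + 1) * (‖Fp (k' + 1)‖ * R) := by ring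
    exact le_of_mul_le_mul_left h5 (hapos k')
  
  -- gradient ratio bound from the logarithmic condition
  have hdG : Real.log ‖Fp 0‖ - Real.log ‖Fp (k' + 1)‖ ≤ ((k' + 1 : ℕ):ℝ) := by
    have hpos0 : 0 < ‖Fp 0‖ * R / ε := div_pos (mul_pos (hGpos 0) hRpos) hε
    have hle : ‖Fp 0‖ * R / ε ≤ Real.exp ((k' + 1 : ℕ):ℝ) := by
      rw [← Real.exp_log hpos0]
      exact Real.exp_le_exp.mpr hklog
    have hεR : ε / R ≤ ‖Fp (k' + 1)‖ := (div_le_iff₀ hRpos).mpr hGk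
    have h2 : ‖Fp 0‖ ≤ Real.exp ((k' + 1 : ℕ):ℝ) * ‖Fp (k' + 1)‖ := by
      have e0 : ‖Fp 0‖ = (‖Fp 0‖ * R / ε) * (ε / R) := by field_simp
      rw [e0]
      calc (‖Fp 0‖ * R / ε) * (ε / R) ≤ Real.exp ((k' + 1 : ℕ):ℝ) * (ε / R) :=
            mul_le_mul_of_nonneg_right hle (by positivity)
        _ ≤ Real.exp ((k' + 1 : ℕ):ℝ) * ‖Fp (k' + 1)‖ :=
            mul_le_mul_of_nonneg_left hεR (Real.exp_pos _).le
    have h3 := Real.log_le_log (hGpos 0) h2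
    rw [Real.log_mul (Real.exp_ne_zero _) (hGpos (k' + 1)).ne', Real.log_exp] at h3
    linarith
  -- logarithmic form of the step-size rule
  have hloga : ∀ j : ℕ, Real.log (a (j + 1)) =
      (((p:ℝ) - 1) / p) * (-(Real.log 2 + Real.log ‖Fp j‖)) + (1 / (p:ℝ)) * Real.log Cp := by
    intro j
    have hbpos : (0:ℝ) < 1 / (2 * ‖Fp j‖) := by
      have := hGpos j; positivity
    rw [harule j,
      Real.log_mul (Real.rpow_pos_of_pos hbpos _).ne' (Real.rpow_pos_of_pos hCp _).ne',
      Real.log_rpow hbpos, Real.log_rpow hCp]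
    have hlog1 : Real.log (1 / (2 * ‖Fp j‖)) = -(Real.log 2 + Real.log ‖Fp j‖) := by
      rw [one_div, Real.log_inv, Real.log_mul two_ne_zero (hGpos j).ne']
    rw [hlog1]
  have hlogu : ∀ j : ℕ, Real.log ‖Fp (j+1)‖ =
      Real.log ‖g (j + 1) - (x (j + 1) - x j)‖ - Real.log (a (j + 1)) := by
    intro j
    rw [hu_eq j, Real.log_mul (hapos j).ne' (hGpos (j+1)).ne']
    ring
  set LA : ℝ := ∑ j ∈ Finset.range (k' + 1), Real.log (a (j + 1)) with hLA
  set LU : ℝ := ∑ j ∈ Finset.range (k' + 1), Real.log ‖g (j + 1) - (x (j + 1) - x j)‖ with hLU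
  set LG : ℝ := ∑ j ∈ Finset.range (k' + 1), Real.log ‖Fp j‖ with hLG
  have E1 : LA = -((((p:ℝ) - 1) / p)) * (((k' + 1 : ℕ):ℝ) * Real.log 2 + LG)
      + ((k' + 1 : ℕ):ℝ) * ((1 / (p:ℝ)) * Real.log Cp) := by
    rw [hLA, Finset.sum_congr rfl fun j _ => hloga j, Finset.sum_add_distrib,
      Finset.sum_const, Finset.card_range, ← Finset.mul_sum]
    have hsplit2 : ∑ j ∈ Finset.range (k' + 1), (-(Real.log 2 + Real.log ‖Fp j‖))
        = -(((k' + 1 : ℕ):ℝ) * Real.log 2 + LG) := by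
      rw [Finset.sum_neg_distrib, Finset.sum_add_distrib, Finset.sum_const,
        Finset.card_range, ← hLG]
      push_cast
      ring
    rw [hsplit2]
    push_cast
    ring
  have E2 : ∑ j ∈ Finset.range (k' + 1), Real.log ‖Fp (j + 1)‖ = LU - LA := by
    rw [Finset.sum_congr rfl fun j _ => hlogu j, Finset.sum_sub_distrib, ← hLU, ← hLA]
  have E3 : ∑ j ∈ Finset.range (k' + 1),
      (Real.log ‖Fp (j + 1)‖ - Real.log ‖Fp j‖)
      = Real.log ‖Fp (k' + 1)‖ - Real.log ‖Fp 0‖ :=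
    Finset.sum_range_sub (fun i => Real.log ‖Fp i‖) (k' + 1)
  have E4 : (LU - LA) - LG = Real.log ‖Fp (k' + 1)‖ - Real.log ‖Fp 0‖ := by
    rw [← E2, hLG, ← Finset.sum_sub_distrib]
    exact E3
  have hLAeq : LA = ((k' + 1 : ℕ):ℝ) * Real.log Cp
      - ((p:ℝ) - 1) * (((k' + 1 : ℕ):ℝ) * Real.log 2 + LU
        + (Real.log ‖Fp 0‖ - Real.log ‖Fp (k' + 1)‖)) := by
    have hLGe : LG = LU - LA - (Real.log ‖Fp (k' + 1)‖ - Real.log ‖Fp 0‖) := by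
      linarith [E4]
    have h := E1
    rw [hLGe] at h
    have h2 : LA * (1 - ((p:ℝ) - 1)/p)
        = -((((p:ℝ) - 1) / p)) * (((k' + 1 : ℕ):ℝ) * Real.log 2 + LU
            + (Real.log ‖Fp 0‖ - Real.log ‖Fp (k' + 1)‖))
          + ((k' + 1 : ℕ):ℝ) * ((1 / (p:ℝ)) * Real.log Cp) := by
      linarith [h]
    have hinv : 1 - ((p:ℝ) - 1)/p = 1/(p:ℝ) := by field_simp; ring
    rw [hinv, mul_one_div] at h2
    have h3 := (div_eq_iff hpne).mp h2
    rw [h3]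
    field_simp
    ring
  
  -- AM-GM lower bound on the sum of step sizes
  set A : ℝ := ∑ j ∈ Finset.range (k' + 1), a (j + 1) with hA
  have hA_ge : ((k' + 1 : ℕ):ℝ) * Real.exp (LA / ((k' + 1 : ℕ):ℝ)) ≤ A := by
    have h := InexactProxAux.mul_exp_avg_le_sum (k' + 1) (by omega)
      (fun j => Real.log (a (j + 1)))
    rw [← hLA] at h
    have h2 : ∑ i ∈ Finset.range (k' + 1), Real.exp (Real.log (a (i + 1))) = A := by
      rw [hA]
      exact Finset.sum_congr rfl fun j _ => Real.exp_log (hapos j)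
    rw [h2] at h
    exact h
  have hA_pos : 0 < A :=
    lt_of_lt_of_le (by positivity) hA_ge
  -- AM-GM for the u_j²
  have hQexp : Real.exp (2 * LU / ((k' + 1 : ℕ):ℝ))
      ≤ (∑ j ∈ Finset.range (k' + 1), ‖g (j + 1) - (x (j + 1) - x j)‖ ^ 2)
        / ((k' + 1 : ℕ):ℝ) := by
    have h := InexactProxAux.mul_exp_avg_le_sum (k' + 1) (by omega)
      (fun j => 2 * Real.log ‖g (j + 1) - (x (j + 1) - x j)‖)
    have h2 : ∑ i ∈ Finset.range (k' + 1),
        Real.exp (2 * Real.log ‖g (i + 1) - (x (i + 1) - x i)‖)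
        = ∑ j ∈ Finset.range (k' + 1), ‖g (j + 1) - (x (j + 1) - x j)‖ ^ 2 := by
      refine Finset.sum_congr rfl fun j _ => ?_
      rw [two_mul, Real.exp_add, Real.exp_log (hu_pos j), sq]
    have h3 : ∑ i ∈ Finset.range (k' + 1),
        2 * Real.log ‖g (i + 1) - (x (i + 1) - x i)‖ = 2 * LU := by
      rw [hLU, Finset.mul_sum]
    rw [h2, h3] at h
    rw [le_div_iff₀ hn0]
    linarith [h]
  -- Jensen's inequality
  rw [InexactProxAux.sum_Icc_one ℝ a (k' + 1),
    InexactProxAux.sum_Icc_one E (fun i => a i • x i) (k' + 1)]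
  rw [← hA]
  set SF : ℝ := ∑ j ∈ Finset.range (k' + 1), a (j + 1) * (F (x (j + 1)) - Fstar) with hSF
  have hJ : F (A⁻¹ • ∑ j ∈ Finset.range (k' + 1), a (j + 1) • x (j + 1)) ≤
      A⁻¹ * ∑ j ∈ Finset.range (k' + 1), a (j + 1) * F (x (j + 1)) := by
    have hA_pos' : 0 < ∑ j ∈ Finset.range (k' + 1), a (j + 1) := by
      rw [← hA]; exact hA_pos
    have h := hFconv.map_centerMass_le (t := Finset.range (k' + 1))
      (w := fun j => a (j + 1)) (p := fun j => x (j + 1))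
      (fun j _ => (hapos j).le) hA_pos' (fun j _ => hx (j + 1))
    simp only [Finset.centerMass, Function.comp, smul_eq_mul] at h
    rw [← hA] at h
    exact h
  have hTeq : SF = (∑ j ∈ Finset.range (k' + 1), a (j + 1) * F (x (j + 1))) - A * Fstar := by
    rw [hSF]
    simp only [mul_sub]
    rw [Finset.sum_sub_distrib, ← Finset.sum_mul, ← hA]
  have hstep1 : F (A⁻¹ • ∑ j ∈ Finset.range (k' + 1), a (j + 1) • x (j + 1)) - Fstar
      ≤ A⁻¹ * SF := by
    have heq : A⁻¹ * SF = A⁻¹ * (∑ j ∈ Finset.range (k' + 1), a (j + 1) * F (x (j + 1))) - Fstar := by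
      rw [hTeq, mul_sub]
      congr 1
      rw [← mul_assoc, inv_mul_cancel₀ hA_pos.ne', one_mul]
    rw [heq]
    linarith [hJ]
  have hstep2 : A⁻¹ * SF ≤ SF / (((k' + 1 : ℕ):ℝ) * Real.exp (LA / ((k' + 1 : ℕ):ℝ))) := by
    rw [← div_eq_inv_mul]
    gcongr
  -- expanding exp(-LA/n)
  have hexpLA : Real.exp (-(LA / ((k' + 1 : ℕ):ℝ))) =
      Cp⁻¹ * Real.exp (((p:ℝ) - 1) * Real.log 2)
        * Real.exp (((p:ℝ) - 1) * (LU / ((k' + 1 : ℕ):ℝ)))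
        * Real.exp (((p:ℝ) - 1)
            * ((Real.log ‖Fp 0‖ - Real.log ‖Fp (k' + 1)‖) / ((k' + 1 : ℕ):ℝ))) := by
    rw [hLAeq]
    have heq : -((((k' + 1 : ℕ):ℝ) * Real.log Cp
        - ((p:ℝ) - 1) * (((k' + 1 : ℕ):ℝ) * Real.log 2 + LU
          + (Real.log ‖Fp 0‖ - Real.log ‖Fp (k' + 1)‖))) / ((k' + 1 : ℕ):ℝ))
        = -Real.log Cp + (((p:ℝ) - 1) * Real.log 2
          + (((p:ℝ) - 1) * (LU / ((k' + 1 : ℕ):ℝ))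
          + ((p:ℝ) - 1) * ((Real.log ‖Fp 0‖ - Real.log ‖Fp (k' + 1)‖) / ((k' + 1 : ℕ):ℝ)))) := by
      field_simp
      ring
    rw [heq, Real.exp_add, Real.exp_add, Real.exp_add, Real.exp_neg, Real.exp_log hCp]
    ring
  have hw0 : (0:ℝ) ≤ ((p:ℝ) - 1)/2 := by linarith
  have hcastp : ((p - 1 : ℕ):ℝ) = (p:ℝ) - 1 := by
    have h1 : (1:ℕ) ≤ p := by omega
    push_cast [h1]
    ring
  have hb1 : Real.exp (((p:ℝ) - 1) * (LU / ((k' + 1 : ℕ):ℝ)))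
      ≤ (R^2 / ((k' + 1 : ℕ):ℝ)) ^ (((p:ℝ) - 1)/2) := by
    have hQn : Real.exp (2 * LU / ((k' + 1 : ℕ):ℝ)) ≤ R^2 / ((k' + 1 : ℕ):ℝ) :=
      hQexp.trans ((div_le_div_iff_of_pos_right hn0).mpr hQ)
    have h1 : (Real.exp (2 * LU / ((k' + 1 : ℕ):ℝ))) ^ (((p:ℝ) - 1)/2)
        ≤ (R^2 / ((k' + 1 : ℕ):ℝ)) ^ (((p:ℝ) - 1)/2) :=
      Real.rpow_le_rpow (Real.exp_pos _).le hQn hw0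
    rw [Real.rpow_def_of_pos (Real.exp_pos _), Real.log_exp] at h1
    have h2 : 2 * LU / ((k' + 1 : ℕ):ℝ) * (((p:ℝ) - 1)/2)
        = ((p:ℝ) - 1) * (LU / ((k' + 1 : ℕ):ℝ)) := by ring
    rw [h2] at h1
    exact h1
  have hb2 : Real.exp (((p:ℝ) - 1)
        * ((Real.log ‖Fp 0‖ - Real.log ‖Fp (k' + 1)‖) / ((k' + 1 : ℕ):ℝ)))
      ≤ Real.exp ((p:ℝ) - 1) := by
    apply Real.exp_le_exp.mpr
    have h1 : (Real.log ‖Fp 0‖ - Real.log ‖Fp (k' + 1)‖) / ((k' + 1 : ℕ):ℝ) ≤ 1 := by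
      rw [div_le_one hn0]
      linarith [hdG]
    calc ((p:ℝ) - 1) * ((Real.log ‖Fp 0‖ - Real.log ‖Fp (k' + 1)‖) / ((k' + 1 : ℕ):ℝ))
        ≤ ((p:ℝ) - 1) * 1 := mul_le_mul_of_nonneg_left h1 (by linarith)
      _ = (p:ℝ) - 1 := by ring
  have hb4 : (R^2 / ((k' + 1 : ℕ):ℝ)) ^ (((p:ℝ) - 1)/2)
      = R^(p - 1) / ((k' + 1 : ℕ):ℝ) ^ (((p:ℝ) - 1)/2) := by
    rw [Real.div_rpow (sq_nonneg R) hn0.le]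
    congr 1
    rw [← Real.rpow_natCast R 2, ← Real.rpow_mul hRpos.le, ← Real.rpow_natCast R (p - 1), hcastp]
    congr 1
    push_cast
    ring
  have hexp2 : Real.exp (((p:ℝ) - 1) * Real.log 2) = (2:ℝ)^(p - 1) := by
    rw [← Real.rpow_natCast (2:ℝ) (p - 1), hcastp,
      Real.rpow_def_of_pos (by norm_num : (0:ℝ) < 2)]
    ring_nf
  -- final assembly
  have hfinal : SF / (((k' + 1 : ℕ):ℝ) * Real.exp (LA / ((k' + 1 : ℕ):ℝ)))
      ≤ Lp * R ^ (p + 1) / ((k' + 1 : ℕ):ℝ) ^ (((p:ℝ) + 1) / 2)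
        * (((p:ℝ) + 1) * 2 ^ (p - 2) * Real.exp ((p:ℝ) - 1) / (Nat.factorial p : ℝ)) := by
    have e1 : SF / (((k' + 1 : ℕ):ℝ) * Real.exp (LA / ((k' + 1 : ℕ):ℝ)))
        = SF * Real.exp (-(LA / ((k' + 1 : ℕ):ℝ))) / ((k' + 1 : ℕ):ℝ) := by
      rw [Real.exp_neg, mul_comm ((k' + 1 : ℕ):ℝ) (Real.exp _), ← div_div,
        div_eq_mul_inv SF]
    rw [e1, hexpLA]
    have e2 : SF * (Cp⁻¹ * Real.exp (((p:ℝ) - 1) * Real.log 2)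
          * Real.exp (((p:ℝ) - 1) * (LU / ((k' + 1 : ℕ):ℝ)))
          * Real.exp (((p:ℝ) - 1)
              * ((Real.log ‖Fp 0‖ - Real.log ‖Fp (k' + 1)‖) / ((k' + 1 : ℕ):ℝ))))
          / ((k' + 1 : ℕ):ℝ)
        ≤ (R^2/2) * (Cp⁻¹ * Real.exp (((p:ℝ) - 1) * Real.log 2)
          * ((R^2 / ((k' + 1 : ℕ):ℝ)) ^ (((p:ℝ) - 1)/2))
          * Real.exp ((p:ℝ) - 1)) / ((k' + 1 : ℕ):ℝ) := by
      gcongr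
    refine e2.trans (le_of_eq ?_)
    rw [hb4, hexp2]
    have hCpinv : Cp⁻¹ = (((p:ℝ) + 1) * Lp) / (Nat.factorial p : ℝ) := by
      rw [hCpdef, inv_div]
    have hnpow : ((k' + 1 : ℕ):ℝ) ^ (((p:ℝ) - 1)/2) * ((k' + 1 : ℕ):ℝ)
        = ((k' + 1 : ℕ):ℝ) ^ (((p:ℝ) + 1)/2) := by
      nth_rewrite 2 [show ((k' + 1 : ℕ):ℝ) = ((k' + 1 : ℕ):ℝ) ^ (1:ℝ) from (Real.rpow_one _).symm]
      rw [← Real.rpow_add hn0]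
      norm_num
      ring_nf
    have hRpow : R^2 * R^(p - 1) = R^(p + 1) := by
      rw [← pow_add]
      congr 1
      omega
    have h2pow : (2:ℝ)^(p - 1) = 2^(p - 2) * 2 := by
      rw [show p - 1 = (p - 2) + 1 by omega, pow_succ]
    have hnwpos : (0:ℝ) < ((k' + 1 : ℕ):ℝ) ^ (((p:ℝ) - 1)/2) :=
      Real.rpow_pos_of_pos hn0 _
    have hnppos : (0:ℝ) < ((k' + 1 : ℕ):ℝ) ^ (((p:ℝ) + 1)/2) :=
      Real.rpow_pos_of_pos hn0 _
    rw [hCpinv, h2pow, ← hnpow, ← hRpow]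
    field_simp
  calc F (A⁻¹ • ∑ j ∈ Finset.range (k' + 1), a (j + 1) • x (j + 1)) - Fstar
      ≤ A⁻¹ * SF := hstep1
    _ ≤ SF / (((k' + 1 : ℕ):ℝ) * Real.exp (LA / ((k' + 1 : ℕ):ℝ))) := hstep2
    _ ≤ _ := hfinal
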